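/- arXiv:1210.4018 — 3 statements merged into one kernel-verified Lean document; each statement's English description precedes it below -/
import Mathlib

section
/- Suppose v ∈ C¹(ℝ²) satisfies ∫_{ℝ²} |∇v|^p dx < ∞ for some p ∈ (1,2). Then limsup_{R→∞} R^{-2} ∫_{B_R(0)} |v| dx < ∞; in particular, for every β > 2, lim_{R→∞} R^{-β} ∫_{B_R(0)} |v| dx = 0. -/
noncomputable section
open MeasureTheory Real Filter
open scoped ENNReal NNReal

/-- The plane `ℝ²` with the Euclidean norm. -/
abbrev Plane := EuclideanSpace ℝ (Fin 2)

section aux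
open Set Metric

lemma lintegral_polar (f : Plane → ℝ≥0∞) (hf : Measurable f) :
    ∫⁻ x, f x = ∫⁻ ω, (∫⁻ r in Set.Ioi (0:ℝ),
      ENNReal.ofReal r * f (r • (ω : Plane))) ∂(volume : Measure Plane).toSphere := by
  have hdim : Module.finrank ℝ Plane = 2 := finrank_euclideanSpace_fin
  have hmg : Measurable fun p : sphere (0:Plane) 1 × Ioi (0:ℝ) => f (p.2.1 • p.1.1) := by
    apply hf.comp
    exact (measurable_subtype_coe.comp measurable_snd).smul
      (measurable_subtype_coe.comp measurable_fst)
  calc ∫⁻ x, f x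
      = ∫⁻ x : ({0}ᶜ : Set Plane), f x.1 ∂((volume : Measure Plane).comap Subtype.val) := by
        rw [lintegral_subtype_comap (measurableSet_singleton (0:Plane)).compl,
          MeasureTheory.restrict_compl_singleton]
    _ = ∫⁻ p : sphere (0:Plane) 1 × Ioi (0:ℝ), f (p.2.1 • p.1.1)
          ∂((volume : Measure Plane).toSphere.prod (.volumeIoiPow (Module.finrank ℝ Plane - 1))) := by
        rw [← (Measure.measurePreserving_homeomorphUnitSphereProd
          (volume : Measure Plane)).lintegral_comp hmg]
        refine lintegral_congr fun x => ?_
        simp only [homeomorphUnitSphereProd_apply_snd_coe, homeomorphUnitSphereProd_apply_fst_coe]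
        rw [smul_inv_smul₀ (norm_ne_zero_iff.2 x.2)]
    _ = ∫⁻ ω, (∫⁻ r : Ioi (0:ℝ), f (r.1 • (ω : Plane))
          ∂(Measure.volumeIoiPow 1)) ∂(volume : Measure Plane).toSphere := by
        rw [hdim, lintegral_prod _ hmg.aemeasurable]
    _ = _ := by
        refine lintegral_congr fun ω => ?_
        have hmeas : Measurable fun r : Ioi (0:ℝ) => f (r.1 • (ω:Plane)) :=
          hf.comp (measurable_subtype_coe.smul measurable_const)
        rw [Measure.volumeIoiPow, lintegral_withDensity_eq_lintegral_mul _
          ((measurable_subtype_coe.pow_const 1).ennreal_ofReal) hmeas,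
          ← lintegral_subtype_comap measurableSet_Ioi
            (fun s : ℝ => ENNReal.ofReal s * f (s • (ω:Plane)))]
        exact lintegral_congr fun r => by simp

lemma ray_bound (v : Plane → ℝ) (hv : ContDiff ℝ 1 v) (w : Plane) (hw : ‖w‖ = 1)
    {r : ℝ} (hr : 1 ≤ r) :
    ENNReal.ofReal |v (r • w)| ≤ ENNReal.ofReal |v w|
      + ∫⁻ s in Set.Ioc 1 r, ENNReal.ofReal ‖fderiv ℝ v (s • w)‖ := by
  have hdiff := hv.differentiable one_ne_zero
  have hd : ∀ s : ℝ, HasDerivAt (fun t => v (t • w)) ((fderiv ℝ v (s • w)) w) s := by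
    intro s
    have h1 : HasDerivAt (fun t : ℝ => t • w) w s := by
      simpa using (hasDerivAt_id s).smul_const w
    exact (hdiff (s • w)).hasFDerivAt.comp_hasDerivAt s h1
  have hcontD : Continuous fun s : ℝ => fderiv ℝ v (s • w) :=
    (hv.continuous_fderiv one_ne_zero).comp (continuous_id.smul continuous_const)
  have hcont' : Continuous fun s : ℝ => (fderiv ℝ v (s • w)) w :=
    (ContinuousLinearMap.apply ℝ ℝ w).continuous.comp hcontD
  have contD : Continuous fun s : ℝ => ‖fderiv ℝ v (s • w)‖ := hcontD.norm
  have key : ∫ s in (1:ℝ)..r, (fderiv ℝ v (s • w)) w = v (r • w) - v ((1:ℝ) • w) :=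
    intervalIntegral.integral_eq_sub_of_hasDerivAt (fun s _ => hd s)
      (hcont'.intervalIntegrable 1 r)
  have h1 : |∫ s in (1:ℝ)..r, (fderiv ℝ v (s • w)) w|
      ≤ ∫ s in (1:ℝ)..r, ‖fderiv ℝ v (s • w)‖ := by
    calc |∫ s in (1:ℝ)..r, (fderiv ℝ v (s • w)) w|
        ≤ ∫ s in (1:ℝ)..r, |(fderiv ℝ v (s • w)) w| :=
          intervalIntegral.abs_integral_le_integral_abs hr
      _ ≤ ∫ s in (1:ℝ)..r, ‖fderiv ℝ v (s • w)‖ := by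
          refine intervalIntegral.integral_mono_on hr (hcont'.abs.intervalIntegrable 1 r)
            (contD.intervalIntegrable 1 r) fun s _ => ?_
          calc |(fderiv ℝ v (s • w)) w| = ‖(fderiv ℝ v (s • w)) w‖ := rfl
            _ ≤ ‖fderiv ℝ v (s • w)‖ * ‖w‖ := (fderiv ℝ v (s • w)).le_opNorm w
            _ = ‖fderiv ℝ v (s • w)‖ := by rw [hw, mul_one]
  have h2 : |v (r • w)| ≤ |v w| + ∫ s in (1:ℝ)..r, ‖fderiv ℝ v (s • w)‖ := by
    have : v (r • w) = v ((1:ℝ) • w) + ∫ s in (1:ℝ)..r, (fderiv ℝ v (s • w)) w := by linarith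
    rw [this, one_smul]
    calc |v w + ∫ s in (1:ℝ)..r, (fderiv ℝ v (s • w)) w|
        ≤ |v w| + |∫ s in (1:ℝ)..r, (fderiv ℝ v (s • w)) w| := abs_add_le _ _
      _ ≤ _ := by linarith
  calc ENNReal.ofReal |v (r • w)|
      ≤ ENNReal.ofReal (|v w| + ∫ s in (1:ℝ)..r, ‖fderiv ℝ v (s • w)‖) :=
        ENNReal.ofReal_le_ofReal h2
    _ ≤ ENNReal.ofReal |v w|
        + ENNReal.ofReal (∫ s in (1:ℝ)..r, ‖fderiv ℝ v (s • w)‖) := ENNReal.ofReal_add_le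
    _ ≤ _ := by
        gcongr
        rw [intervalIntegral.integral_of_le hr]
        exact le_of_eq (ofReal_integral_eq_lintegral_ofReal
          (contD.integrableOn_Ioc) (Eventually.of_forall fun s => norm_nonneg _))

lemma K_finite (p : ℝ) (hp1 : 1 < p) (hp2 : p < 2) (D : Plane → ℝ) (hD : Continuous D)
    (hDnn : ∀ x, 0 ≤ D x)
    (henergy : ∫⁻ x : Plane, ENNReal.ofReal (D x ^ p) < ⊤) :
    ∫⁻ x : Plane, ENNReal.ofReal (D x) *
      ({x : Plane | 1 < ‖x‖}.indicator (fun x => ENNReal.ofReal ‖x‖⁻¹) x) < ⊤ := by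
  set q : ℝ := p / (p - 1) with hq_def
  have hpq : p.HolderConjugate q := Real.holderConjugate_iff.mpr ⟨hp1, by
    rw [hq_def]; field_simp; ring⟩
  have hq2 : 2 < q := by
    rw [hq_def, lt_div_iff₀ (by linarith)]; nlinarith
  have hq0 : 0 < q := by linarith
  have hmS : MeasurableSet {x : Plane | 1 < ‖x‖} :=
    measurableSet_lt measurable_const measurable_norm
  have hf : AEMeasurable (fun x : Plane => ENNReal.ofReal (D x)) volume :=
    (hD.measurable.ennreal_ofReal).aemeasurable
  have hg : AEMeasurable
      (fun x : Plane => ({x : Plane | 1 < ‖x‖}.indicator (fun x => ENNReal.ofReal ‖x‖⁻¹) x))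
      volume := by
    exact ((measurable_norm.inv.ennreal_ofReal).indicator hmS).aemeasurable
  have holder := ENNReal.lintegral_mul_le_Lp_mul_Lq volume hpq hf hg
  refine lt_of_le_of_lt holder ?_
  have hfp : ∫⁻ x : Plane, (ENNReal.ofReal (D x)) ^ p < ⊤ := by
    refine lt_of_eq_of_lt (lintegral_congr fun x => ?_) henergy
    rw [← ENNReal.ofReal_rpow_of_nonneg (hDnn x) (by linarith)]
  have hgq : ∫⁻ x : Plane,
      ({x : Plane | 1 < ‖x‖}.indicator (fun x => ENNReal.ofReal ‖x‖⁻¹) x) ^ q < ⊤ := by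
    have hind : ∀ x : Plane,
        ({x : Plane | 1 < ‖x‖}.indicator (fun x => ENNReal.ofReal ‖x‖⁻¹) x) ^ q
        = {x : Plane | 1 < ‖x‖}.indicator (fun x => (ENNReal.ofReal ‖x‖⁻¹) ^ q) x := by
      intro x
      by_cases hx : x ∈ {x : Plane | 1 < ‖x‖}
      · simp [hx]
      · simp [hx, ENNReal.zero_rpow_of_pos hq0]
    simp_rw [hind]
    rw [lintegral_indicator hmS]
    have hptw : ∀ x ∈ {x : Plane | 1 < ‖x‖},
        (ENNReal.ofReal ‖x‖⁻¹) ^ q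
          ≤ ENNReal.ofReal (2 ^ q) * ENNReal.ofReal ((1 + ‖x‖) ^ (-q)) := by
      intro x hx
      have hx1 : (1:ℝ) < ‖x‖ := hx
      have h0 : (0:ℝ) < ‖x‖ := by linarith
      conv_lhs => rw [ENNReal.ofReal_rpow_of_nonneg (by positivity) hq0.le]
      rw [← ENNReal.ofReal_mul (by positivity)]
      refine ENNReal.ofReal_le_ofReal ?_
      have h1x : (0:ℝ) < 1 + ‖x‖ := by linarith
      have hb : ‖x‖⁻¹ ≤ 2 * (1 + ‖x‖)⁻¹ := by
        rw [show (2:ℝ) * (1+‖x‖)⁻¹ = 2/(1+‖x‖) by ring, inv_eq_one_div,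
          div_le_div_iff₀ h0 h1x]
        linarith
      calc ‖x‖⁻¹ ^ q ≤ (2 * (1 + ‖x‖)⁻¹) ^ q :=
            Real.rpow_le_rpow (by positivity) hb hq0.le
        _ = 2 ^ q * ((1 + ‖x‖)⁻¹) ^ q := Real.mul_rpow (by norm_num) (by positivity)
        _ = 2 ^ q * (1 + ‖x‖) ^ (-q) := by
            rw [Real.inv_rpow (by positivity), ← Real.rpow_neg (by positivity)]
    calc ∫⁻ x in {x : Plane | 1 < ‖x‖}, (ENNReal.ofReal ‖x‖⁻¹) ^ q
        ≤ ∫⁻ x in {x : Plane | 1 < ‖x‖},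
            ENNReal.ofReal (2 ^ q) * ENNReal.ofReal ((1 + ‖x‖) ^ (-q)) :=
          setLIntegral_mono' hmS hptw
      _ ≤ ∫⁻ x : Plane, ENNReal.ofReal (2 ^ q) * ENNReal.ofReal ((1 + ‖x‖) ^ (-q)) :=
          setLIntegral_le_lintegral _ _
      _ = ENNReal.ofReal (2 ^ q) * ∫⁻ x : Plane, ENNReal.ofReal ((1 + ‖x‖) ^ (-q)) :=
          lintegral_const_mul' _ _ ENNReal.ofReal_ne_top
      _ < ⊤ := by
          refine ENNReal.mul_lt_top ENNReal.ofReal_lt_top ?_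
          refine finite_integral_one_add_norm ?_
          rw [finrank_euclideanSpace_fin]; exact_mod_cast hq2
  refine ENNReal.mul_lt_top ?_ ?_
  · exact ENNReal.rpow_lt_top_of_nonneg (by positivity) hfp.ne
  · exact ENNReal.rpow_lt_top_of_nonneg (by positivity) hgq.ne

end aux

/-- if `v ∈ C¹(ℝ²)` and `∫_{ℝ²} |∇v|^p dx < ∞` for some
`p ∈ (1,2)`, then `limsup_{R→∞} R^{-2} ∫_{B_R(0)} |v| dx < ∞`; in particular
`R^{-β} ∫_{B_R(0)} |v| dx → 0` as `R → ∞` for every `β > 2`. -/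
theorem mean_growth_sub (p : ℝ) (hp1 : 1 < p) (hp2 : p < 2)
    (v : Plane → ℝ) (hv : ContDiff ℝ 1 v)
    (henergy : ∫⁻ x : Plane, ENNReal.ofReal (‖fderiv ℝ v x‖ ^ p) < ⊤) :
    (∃ C R₀ : ℝ, ∀ R : ℝ, R₀ ≤ R →
        R ^ (-(2 : ℝ)) * (∫ x in Metric.ball (0 : Plane) R, |v x|) ≤ C) ∧
      ∀ β : ℝ, 2 < β →
        Tendsto (fun R : ℝ => R ^ (-β) * ∫ x in Metric.ball (0 : Plane) R, |v x|)
          atTop (nhds 0) := by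
  classical
  set D : Plane → ℝ := fun x => ‖fderiv ℝ v x‖ with hD_def
  have hDc : Continuous D := (hv.continuous_fderiv one_ne_zero).norm
  have hvc : Continuous v := hv.continuous
  set ν := (volume : Measure Plane).toSphere with hν_def
  obtain ⟨A, hA⟩ := (isCompact_closedBall (0:Plane) 1).exists_bound_of_continuousOn
    hvc.continuousOn
  have hA0 : 0 ≤ A :=
    le_trans (norm_nonneg (v 0)) (hA 0 (Metric.mem_closedBall_self one_pos.le))
  set K : ℝ≥0∞ := ∫⁻ x : Plane, ENNReal.ofReal (D x) *
      ({x : Plane | 1 < ‖x‖}.indicator (fun x => ENNReal.ofReal ‖x‖⁻¹) x) with hK_def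
  have hKfin : K < ⊤ := K_finite p hp1 hp2 D hDc (fun x => norm_nonneg _) henergy
  set Ctot : ℝ≥0∞ := ENNReal.ofReal A * ν Set.univ + K with hCtot_def
  have hCfin : Ctot < ⊤ := by
    refine ENNReal.add_lt_top.2 ⟨?_, hKfin⟩
    exact ENNReal.mul_lt_top ENNReal.ofReal_lt_top (measure_lt_top ν _)
  have hWm : Measurable fun x : Plane => ENNReal.ofReal (D x) *
      ({x : Plane | 1 < ‖x‖}.indicator (fun x => ENNReal.ofReal ‖x‖⁻¹) x) := by
    refine (hDc.measurable.ennreal_ofReal).mul ?_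
    exact (measurable_norm.inv.ennreal_ofReal).indicator
      (measurableSet_lt measurable_const measurable_norm)
  -- the key uniform bound
  have main : ∀ R : ℝ, 1 ≤ R →
      ∫⁻ x in Metric.ball (0:Plane) R, ENNReal.ofReal |v x|
        ≤ ENNReal.ofReal (R^2/2) * Ctot := by
    intro R hR
    have hmv : Measurable fun x : Plane => ENNReal.ofReal |v x| :=
      hvc.abs.measurable.ennreal_ofReal
    set f : Plane → ℝ≥0∞ :=
      (Metric.ball (0:Plane) R).indicator (fun x => ENNReal.ofReal |v x|) with hf_def
    have hfm : Measurable f := hmv.indicator measurableSet_ball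
    have h0 : ∫⁻ x in Metric.ball (0:Plane) R, ENNReal.ofReal |v x| = ∫⁻ x, f x :=
      (lintegral_indicator measurableSet_ball _).symm
    -- the radial integral of r over (0, R]
    have hradial : ∫⁻ r in Set.Ioi (0:ℝ),
        (Set.Ioc (0:ℝ) R).indicator (fun r => ENNReal.ofReal r) r
          = ENNReal.ofReal (R^2/2) := by
      rw [setLIntegral_indicator measurableSet_Ioc,
        Set.inter_eq_left.2 (Set.Ioc_subset_Ioi_self)]
      rw [← ofReal_integral_eq_lintegral_ofReal]
      · congr 1
        rw [← intervalIntegral.integral_of_le (by linarith : (0:ℝ) ≤ R)]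
        simp
      · exact (continuous_id.integrableOn_Ioc)
      · exact (ae_restrict_mem measurableSet_Ioc).mono fun x hx => hx.1.le
    rw [h0, lintegral_polar f hfm]
    have step1 : ∀ ω : Metric.sphere (0:Plane) 1,
        (∫⁻ r in Set.Ioi (0:ℝ), ENNReal.ofReal r * f (r • (ω:Plane)))
          ≤ ENNReal.ofReal (R^2/2) * (ENNReal.ofReal A
              + ∫⁻ s in Set.Ioc (1:ℝ) R, ENNReal.ofReal (D (s • (ω:Plane)))) := by
      intro ω
      set Hω : ℝ≥0∞ := ∫⁻ s in Set.Ioc (1:ℝ) R, ENNReal.ofReal (D (s • (ω:Plane)))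
        with hHω_def
      have hωn : ‖(ω:Plane)‖ = 1 := mem_sphere_zero_iff_norm.mp ω.2
      have ptw : ∀ r ∈ Set.Ioi (0:ℝ), ENNReal.ofReal r * f (r • (ω:Plane))
          ≤ (Set.Ioc (0:ℝ) R).indicator (fun r => ENNReal.ofReal r) r
            * (ENNReal.ofReal A + Hω) := by
        intro r hr
        have hrpos : 0 < r := hr
        have hnorm : ‖r • (ω:Plane)‖ = r := by
          rw [norm_smul, hωn, mul_one, Real.norm_eq_abs, abs_of_pos hrpos]
        by_cases hrR : r < R
        · have hmem : r • (ω:Plane) ∈ Metric.ball (0:Plane) R := by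
            rw [mem_ball_zero_iff, hnorm]; exact hrR
          rw [hf_def, Set.indicator_of_mem hmem]
          have hbound : ENNReal.ofReal |v (r • (ω:Plane))| ≤ ENNReal.ofReal A + Hω := by
            by_cases hr1 : r ≤ 1
            · have hmem1 : r • (ω:Plane) ∈ Metric.closedBall (0:Plane) 1 := by
                rw [mem_closedBall_zero_iff, hnorm]; exact hr1
              calc ENNReal.ofReal |v (r • (ω:Plane))| ≤ ENNReal.ofReal A :=
                    ENNReal.ofReal_le_ofReal
                      (by simpa [Real.norm_eq_abs] using hA _ hmem1)
                _ ≤ _ := le_self_add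
            · push_neg at hr1
              calc ENNReal.ofReal |v (r • (ω:Plane))|
                  ≤ ENNReal.ofReal |v (ω:Plane)|
                    + ∫⁻ s in Set.Ioc (1:ℝ) r, ENNReal.ofReal (D (s • (ω:Plane))) :=
                    ray_bound v hv (ω:Plane) hωn hr1.le
                _ ≤ ENNReal.ofReal A + Hω := by
                    gcongr
                    · have hmem1 : (ω:Plane) ∈ Metric.closedBall (0:Plane) 1 := by
                        rw [mem_closedBall_zero_iff, hωn]
                      simpa [Real.norm_eq_abs] using hA _ hmem1
                    · exact lintegral_mono_set (Set.Ioc_subset_Ioc_right hrR.le)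
          calc ENNReal.ofReal r * ENNReal.ofReal |v (r • (ω:Plane))|
              ≤ ENNReal.ofReal r * (ENNReal.ofReal A + Hω) := mul_le_mul_right hbound _
            _ = _ := by rw [Set.indicator_of_mem (Set.mem_Ioc.mpr ⟨hrpos, hrR.le⟩)]
        · have hnmem : r • (ω:Plane) ∉ Metric.ball (0:Plane) R := by
            rw [mem_ball_zero_iff, hnorm]; exact hrR
          rw [hf_def, Set.indicator_of_notMem hnmem, mul_zero]
          exact zero_le
      calc ∫⁻ r in Set.Ioi (0:ℝ), ENNReal.ofReal r * f (r • (ω:Plane))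
          ≤ ∫⁻ r in Set.Ioi (0:ℝ),
              (Set.Ioc (0:ℝ) R).indicator (fun r => ENNReal.ofReal r) r
                * (ENNReal.ofReal A + Hω) := setLIntegral_mono' measurableSet_Ioi ptw
        _ = (∫⁻ r in Set.Ioi (0:ℝ),
              (Set.Ioc (0:ℝ) R).indicator (fun r => ENNReal.ofReal r) r)
                * (ENNReal.ofReal A + Hω) :=
            lintegral_mul_const _ ((measurable_id.ennreal_ofReal.indicator measurableSet_Ioc))
        _ = _ := by rw [hradial]
    -- integrate over the sphere
    have hJK : (∫⁻ ω, (∫⁻ s in Set.Ioc (1:ℝ) R,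
        ENNReal.ofReal (D (s • (ω:Plane)))) ∂ν) ≤ K := by
      rw [hK_def, lintegral_polar _ hWm]
      refine lintegral_mono fun ω => ?_
      have hωn : ‖(ω:Plane)‖ = 1 := mem_sphere_zero_iff_norm.mp ω.2
      have hrw : ∫⁻ s in Set.Ioc (1:ℝ) R, ENNReal.ofReal (D (s • (ω:Plane)))
          = ∫⁻ s in Set.Ioi (0:ℝ),
              (Set.Ioc (1:ℝ) R).indicator (fun s => ENNReal.ofReal (D (s • (ω:Plane)))) s := by
        rw [setLIntegral_indicator measurableSet_Ioc,
          Set.inter_eq_left.2 (Set.Ioc_subset_Ioi_self.trans (Set.Ioi_subset_Ioi zero_le_one))]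
      rw [hrw]
      refine setLIntegral_mono' measurableSet_Ioi fun s hs => ?_
      have hspos : (0:ℝ) < s := hs
      by_cases hsm : s ∈ Set.Ioc (1:ℝ) R
      · have hs1 : (1:ℝ) < s := hsm.1
        have hnorm : ‖s • (ω:Plane)‖ = s := by
          rw [norm_smul, hωn, mul_one, Real.norm_eq_abs, abs_of_pos hspos]
        have hmem : s • (ω:Plane) ∈ {x : Plane | 1 < ‖x‖} := by
          rw [Set.mem_setOf_eq, hnorm]; exact hs1
        rw [Set.indicator_of_mem hsm, Set.indicator_of_mem hmem]
        refine le_of_eq ?_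
        rw [hnorm, ← mul_assoc, mul_comm (ENNReal.ofReal s), mul_assoc,
          ← ENNReal.ofReal_mul hspos.le, mul_inv_cancel₀ hspos.ne', ENNReal.ofReal_one,
          mul_one]
      · rw [Set.indicator_of_notMem hsm]
        exact zero_le
    calc ∫⁻ ω, (∫⁻ r in Set.Ioi (0:ℝ), ENNReal.ofReal r * f (r • (ω:Plane))) ∂ν
        ≤ ∫⁻ ω, ENNReal.ofReal (R^2/2) * (ENNReal.ofReal A
            + ∫⁻ s in Set.Ioc (1:ℝ) R, ENNReal.ofReal (D (s • (ω:Plane)))) ∂ν :=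
          lintegral_mono step1
      _ = ENNReal.ofReal (R^2/2) * ∫⁻ ω, (ENNReal.ofReal A
            + ∫⁻ s in Set.Ioc (1:ℝ) R, ENNReal.ofReal (D (s • (ω:Plane)))) ∂ν :=
          lintegral_const_mul' _ _ ENNReal.ofReal_ne_top
      _ = ENNReal.ofReal (R^2/2) * (ENNReal.ofReal A * ν Set.univ
            + ∫⁻ ω, (∫⁻ s in Set.Ioc (1:ℝ) R,
                ENNReal.ofReal (D (s • (ω:Plane)))) ∂ν) := by
          rw [lintegral_add_left measurable_const, lintegral_const]
      _ ≤ ENNReal.ofReal (R^2/2) * (ENNReal.ofReal A * ν Set.univ + K) := by gcongr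
  -- pass to real integrals
  have hIB : ∀ R : ℝ, ∫ x in Metric.ball (0:Plane) R, |v x|
      = (∫⁻ x in Metric.ball (0:Plane) R, ENNReal.ofReal |v x|).toReal := fun R =>
    integral_eq_lintegral_of_nonneg_ae (Eventually.of_forall fun x => abs_nonneg _)
      hvc.abs.aestronglyMeasurable.restrict
  have hreal : ∀ R : ℝ, 1 ≤ R →
      ∫ x in Metric.ball (0:Plane) R, |v x| ≤ R^2/2 * Ctot.toReal := by
    intro R hR
    rw [hIB R]
    calc (∫⁻ x in Metric.ball (0:Plane) R, ENNReal.ofReal |v x|).toReal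
        ≤ (ENNReal.ofReal (R^2/2) * Ctot).toReal :=
          ENNReal.toReal_mono (ENNReal.mul_ne_top ENNReal.ofReal_ne_top hCfin.ne)
            (main R hR)
      _ = R^2/2 * Ctot.toReal := by
          rw [ENNReal.toReal_mul, ENNReal.toReal_ofReal (by positivity)]
  have hnn : ∀ R : ℝ, 0 ≤ ∫ x in Metric.ball (0:Plane) R, |v x| := fun R =>
    integral_nonneg fun x => abs_nonneg _
  have h2rpow : ∀ R : ℝ, 0 < R → R ^ (-(2:ℝ)) = (R^2)⁻¹ := by
    intro R hR
    rw [Real.rpow_neg hR.le, show ((2:ℝ)) = ((2:ℕ):ℝ) by norm_num, Real.rpow_natCast]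
  have part1 : ∀ R : ℝ, 1 ≤ R →
      R ^ (-(2:ℝ)) * (∫ x in Metric.ball (0:Plane) R, |v x|) ≤ Ctot.toReal / 2 := by
    intro R hR
    have hRpos : (0:ℝ) < R := lt_of_lt_of_le one_pos hR
    calc R ^ (-(2:ℝ)) * (∫ x in Metric.ball (0:Plane) R, |v x|)
        ≤ R ^ (-(2:ℝ)) * (R^2/2 * Ctot.toReal) := by
          have : (0:ℝ) ≤ R ^ (-(2:ℝ)) := Real.rpow_nonneg hRpos.le _
          exact mul_le_mul_of_nonneg_left (hreal R hR) this
      _ = Ctot.toReal / 2 := by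
          rw [h2rpow R hRpos]
          field_simp
  refine ⟨⟨Ctot.toReal / 2, 1, part1⟩, ?_⟩
  intro β hβ
  have hc0 : (0:ℝ) ≤ Ctot.toReal / 2 := by positivity
  refine squeeze_zero' ?_ ?_ (g := fun R : ℝ => Ctot.toReal / 2 * R ^ (-(β - 2))) ?_
  · filter_upwards [eventually_ge_atTop (1:ℝ)] with R hR
    have hRpos : (0:ℝ) < R := lt_of_lt_of_le one_pos hR
    exact mul_nonneg (Real.rpow_nonneg hRpos.le _) (hnn R)
  · filter_upwards [eventually_ge_atTop (1:ℝ)] with R hR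
    have hRpos : (0:ℝ) < R := lt_of_lt_of_le one_pos hR
    have hsplit : R ^ (-β) = R ^ (-(β - 2)) * R ^ (-(2:ℝ)) := by
      rw [← Real.rpow_add hRpos]; ring_nf
    calc R ^ (-β) * ∫ x in Metric.ball (0:Plane) R, |v x|
        = R ^ (-(β - 2)) * (R ^ (-(2:ℝ)) * ∫ x in Metric.ball (0:Plane) R, |v x|) := by
          rw [hsplit, mul_assoc]
      _ ≤ R ^ (-(β - 2)) * (Ctot.toReal / 2) :=
          mul_le_mul_of_nonneg_left (part1 R hR) (Real.rpow_nonneg hRpos.le _)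
      _ = Ctot.toReal / 2 * R ^ (-(β - 2)) := mul_comm _ _
  · have := (tendsto_rpow_neg_atTop (by linarith : (0:ℝ) < β - 2)).const_mul
      (Ctot.toReal / 2)
    simpa using this
end
end

section
/- Suppose v ∈ C¹(ℝ²) satisfies ∫_{ℝ²} |∇v|^p dx < ∞ for some p ∈ (1,2). Then sup_{R ≥ 1} ∫_0^{2π} |v(R cos θ, R sin θ)|^p dθ < ∞. -/
noncomputable section
open MeasureTheory Real

/-- The point of the plane with Cartesian coordinates `(a, b)`. -/
def pt (a b : ℝ) : Plane := WithLp.toLp 2 ![a, b]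

open Set

private theorem pt_meas_pres' : MeasurePreserving (fun q : ℝ × ℝ => pt q.1 q.2) volume volume :=
  ((EuclideanSpace.volume_preserving_symm_measurableEquiv_toLp (Fin 2)).symm).comp
    ((MeasureTheory.volume_preserving_finTwoArrow ℝ).symm)

private theorem pt_smul' (r a b : ℝ) : pt (r * a) (r * b) = r • pt a b := by
  unfold pt; ext i; fin_cases i <;> simp

private theorem norm_pt_cos_sin' (θ : ℝ) : ‖pt (cos θ) (sin θ)‖ = 1 := by
  rw [EuclideanSpace.norm_eq]
  simp [pt, Fin.sum_univ_two]

private theorem pt_cont' : Continuous (fun θ : ℝ => pt (cos θ) (sin θ)) := by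
  unfold pt
  refine (PiLp.continuous_toLp 2 _).comp ?_
  apply continuous_pi
  intro i
  fin_cases i <;> simp <;> fun_prop

private theorem my_lintegral_comp_polarCoord_symm' (f : ℝ × ℝ → ENNReal) :
    (∫⁻ p in polarCoord.target, ENNReal.ofReal p.1 * f (polarCoord.symm p)) = ∫⁻ p, f p := by
  set B : ℝ × ℝ → ℝ × ℝ →L[ℝ] ℝ × ℝ := fun p =>
    LinearMap.toContinuousLinearMap (Matrix.toLin (Module.Basis.finTwoProd ℝ) (Module.Basis.finTwoProd ℝ)
      !![cos p.2, -p.1 * sin p.2; sin p.2, p.1 * cos p.2])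
  have A : ∀ p ∈ polarCoord.target, HasFDerivWithinAt polarCoord.symm (B p) polarCoord.target p :=
    fun p _ => (hasFDerivAt_polarCoord_symm p).hasFDerivWithinAt
  have B_det : ∀ p, (B p).det = p.1 := by
    intro p
    conv_rhs => rw [← one_mul p.1, ← cos_sq_add_sin_sq p.2]
    simp only [B, neg_mul, LinearMap.det_toContinuousLinearMap, LinearMap.det_toLin,
      Matrix.det_fin_two_of, sub_neg_eq_add]
    ring
  symm
  calc
    ∫⁻ p, f p = ∫⁻ p in polarCoord.source, f p := by
      rw [← setLIntegral_univ]
      exact (setLIntegral_congr polarCoord_source_ae_eq_univ.symm)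
    _ = ∫⁻ p in polarCoord.symm '' polarCoord.target, f p := by
      rw [polarCoord.symm_image_target_eq_source]
    _ = ∫⁻ p in polarCoord.target, ENNReal.ofReal |(B p).det| * f (polarCoord.symm p) :=
      lintegral_image_eq_lintegral_abs_det_fderiv_mul volume
        polarCoord.open_target.measurableSet A polarCoord.symm.injOn f
    _ = ∫⁻ p in polarCoord.target, ENNReal.ofReal p.1 * f (polarCoord.symm p) := by
      refine setLIntegral_congr_fun polarCoord.open_target.measurableSet
        (fun x hx => ?_)
      rw [B_det, abs_of_pos hx.1]

private theorem theta_int' (F : Plane → ENNReal) (hF : Measurable F) :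
    ∫⁻ θ in Ioc (-π) π, ∫⁻ r in Ioi (1:ℝ),
        F (r • pt (cos θ) (sin θ)) * ENNReal.ofReal r ≤ ∫⁻ x : Plane, F x := by
  have hmp : Measurable (fun q : ℝ × ℝ => F (pt q.1 q.2)) :=
    hF.comp pt_meas_pres'.measurable
  calc ∫⁻ θ in Ioc (-π) π, ∫⁻ r in Ioi (1:ℝ), F (r • pt (cos θ) (sin θ)) * ENNReal.ofReal r
      = ∫⁻ θ in Ioo (-π) π, ∫⁻ r in Ioi (1:ℝ), F (r • pt (cos θ) (sin θ)) * ENNReal.ofReal r :=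
        (setLIntegral_congr Ioo_ae_eq_Ioc).symm
    _ = ∫⁻ θ in Ioo (-π) π, ∫⁻ r in Ioi (1:ℝ),
          ENNReal.ofReal r * F (pt (r * cos θ) (r * sin θ)) := by
        congr 1; ext θ; congr 1; ext r; rw [pt_smul', mul_comm]
    _ = ∫⁻ q in (Ioi (1:ℝ)) ×ˢ (Ioo (-π) π),
          ENNReal.ofReal q.1 * F (pt (q.1 * cos q.2) (q.1 * sin q.2)) := by
        rw [MeasureTheory.Measure.volume_eq_prod, ← Measure.prod_restrict,
          MeasureTheory.lintegral_prod_symm]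
        exact ((ENNReal.measurable_ofReal.comp measurable_fst).mul
          (hmp.comp ((measurable_fst.mul (Real.measurable_cos.comp measurable_snd)).prodMk
            (measurable_fst.mul (Real.measurable_sin.comp measurable_snd))))).aemeasurable
    _ ≤ ∫⁻ q in polarCoord.target, ENNReal.ofReal q.1 * F (pt (q.1 * cos q.2) (q.1 * sin q.2)) := by
        apply lintegral_mono_set
        show _ ⊆ Ioi (0:ℝ) ×ˢ Ioo (-π) π
        exact Set.prod_mono_left (Ioi_subset_Ioi (by norm_num))
    _ = ∫⁻ q : ℝ × ℝ, F (pt q.1 q.2) := by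
        rw [← my_lintegral_comp_polarCoord_symm' (fun q : ℝ × ℝ => F (pt q.1 q.2))]
        rfl
    _ = ∫⁻ x : Plane, F x := pt_meas_pres'.lintegral_comp hF

private theorem holder_ray' {p q : ℝ} (hpq : p.HolderConjugate q) (D : ℝ → ℝ)
    (hD : Continuous D) (hDnn : ∀ r, 0 ≤ D r) (R : ℝ) (hR : 1 ≤ R) :
    ENNReal.ofReal (∫ r in (1:ℝ)..R, D r) ≤
      (∫⁻ r in Ioi (1:ℝ), ENNReal.ofReal (D r ^ p) * ENNReal.ofReal r) ^ (1/p) *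
      (∫⁻ r in Ioi (1:ℝ), ENNReal.ofReal (r ^ (-(q/p)))) ^ (1/q) := by
  have hp0 : 0 < p := hpq.pos
  have h1 : ENNReal.ofReal (∫ r in (1:ℝ)..R, D r)
      = ∫⁻ r in Ioc (1:ℝ) R, ENNReal.ofReal (D r) := by
    rw [intervalIntegral.integral_of_le hR,
      ofReal_integral_eq_lintegral_ofReal (hD.integrableOn_Ioc)
        (Filter.Eventually.of_forall fun r => hDnn r)]
  rw [h1]
  set f : ℝ → ENNReal := fun r => ENNReal.ofReal (D r) * ENNReal.ofReal r ^ (1/p) with hf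
  set g : ℝ → ENNReal := fun r => ENNReal.ofReal r ^ (-(1/p)) with hg
  have key : ∫⁻ r in Ioc (1:ℝ) R, ENNReal.ofReal (D r)
      = ∫⁻ r in Ioc (1:ℝ) R, (f * g) r := by
    refine setLIntegral_congr_fun measurableSet_Ioc (fun r hr => ?_)
    have hr0 : (0:ℝ) < r := lt_of_lt_of_le one_pos hr.1.le
    have hne0 : ENNReal.ofReal r ≠ 0 := by simp [hr0]
    have hnetop : ENNReal.ofReal r ≠ ⊤ := ENNReal.ofReal_ne_top
    simp only [f, g, Pi.mul_apply]
    rw [mul_assoc, ← ENNReal.rpow_add _ _ hne0 hnetop]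
    simp
  rw [key]
  refine le_trans (ENNReal.lintegral_mul_le_Lp_mul_Lq _ hpq ?_ ?_) ?_
  · exact ((ENNReal.measurable_ofReal.comp hD.measurable).mul
      ((ENNReal.measurable_ofReal.comp measurable_id).pow_const _)).aemeasurable
  · exact ((ENNReal.measurable_ofReal.comp measurable_id).pow_const _).aemeasurable
  refine mul_le_mul' (ENNReal.rpow_le_rpow ?_ (by positivity))
    (ENNReal.rpow_le_rpow ?_ (le_of_lt (by rw [one_div]; exact inv_pos.2 hpq.symm.pos)))
  · calc ∫⁻ r in Ioc (1:ℝ) R, f r ^ p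
        = ∫⁻ r in Ioc (1:ℝ) R, ENNReal.ofReal (D r ^ p) * ENNReal.ofReal r := by
          refine setLIntegral_congr_fun measurableSet_Ioc
            (fun r hr => ?_)
          simp only [f]
          rw [ENNReal.mul_rpow_of_nonneg _ _ hp0.le, ← ENNReal.rpow_mul,
            one_div_mul_cancel hp0.ne', ENNReal.rpow_one,
            ← ENNReal.ofReal_rpow_of_nonneg (hDnn r) hp0.le]
      _ ≤ _ := lintegral_mono_set Ioc_subset_Ioi_self
  · calc ∫⁻ r in Ioc (1:ℝ) R, g r ^ q
        = ∫⁻ r in Ioc (1:ℝ) R, ENNReal.ofReal (r ^ (-(q/p))) := by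
          refine setLIntegral_congr_fun measurableSet_Ioc
            (fun r hr => ?_)
          have hr0 : (0:ℝ) < r := lt_of_lt_of_le one_pos hr.1.le
          simp only [g]
          rw [← ENNReal.rpow_mul, ← ENNReal.ofReal_rpow_of_pos hr0]
          congr 1
          ring
      _ ≤ _ := lintegral_mono_set Ioc_subset_Ioi_self

private theorem add_rpow_le' (a b : ENNReal) {p : ℝ} (hp : 0 ≤ p) :
    (a + b) ^ p ≤ (2:ENNReal) ^ p * (a ^ p + b ^ p) := by
  have h1 : a + b ≤ 2 * max a b := by
    rw [two_mul]
    exact add_le_add (le_max_left a b) (le_max_right a b)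
  calc (a + b) ^ p ≤ (2 * max a b) ^ p := ENNReal.rpow_le_rpow h1 hp
    _ = 2 ^ p * (max a b) ^ p := ENNReal.mul_rpow_of_nonneg _ _ hp
    _ ≤ 2 ^ p * (a ^ p + b ^ p) := by
        gcongr
        rcases max_cases a b with ⟨h, _⟩ | ⟨h, _⟩ <;> rw [h]
        · exact le_add_right le_rfl
        · exact le_add_left le_rfl

private theorem Kq_lt_top' {a : ℝ} (ha : a < -1) :
    (∫⁻ r in Ioi (1:ℝ), ENNReal.ofReal (r ^ a)) < ⊤ :=
  (integrableOn_Ioi_rpow_of_lt ha one_pos).lintegral_lt_top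

private theorem ftc_ray' (v : Plane → ℝ) (hv : ContDiff ℝ 1 v) (w : Plane) (hw : ‖w‖ = 1)
    (R : ℝ) (hR : 1 ≤ R) :
    |v (R • w)| ≤ |v w| + ∫ r in (1:ℝ)..R, ‖fderiv ℝ v (r • w)‖ := by
  have hdiff : Differentiable ℝ v := hv.differentiable one_ne_zero
  have hcd : Continuous fun x => fderiv ℝ v x := (hv.continuous_fderiv one_ne_zero)
  have hsm : Continuous fun r : ℝ => r • w := continuous_id.smul continuous_const
  have hder : ∀ r : ℝ, HasDerivAt (fun r : ℝ => v (r • w)) (fderiv ℝ v (r • w) w) r := by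
    intro r
    have h1 : HasDerivAt (fun r : ℝ => r • w) w r := by
      simpa using (hasDerivAt_id r).smul_const w
    exact ((hdiff (r • w)).hasFDerivAt.comp_hasDerivAt r h1)
  have hcont : Continuous fun r : ℝ => fderiv ℝ v (r • w) w :=
    (hcd.comp hsm).clm_apply continuous_const
  have ftc : ∫ r in (1:ℝ)..R, fderiv ℝ v (r • w) w = v (R • w) - v ((1:ℝ) • w) :=
    intervalIntegral.integral_eq_sub_of_hasDerivAt (fun r _ => hder r)
      (hcont.intervalIntegrable _ _)
  have h2 : v (R • w) = v w + ∫ r in (1:ℝ)..R, fderiv ℝ v (r • w) w := by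
    rw [ftc]; rw [one_smul]; ring
  rw [h2]
  refine (abs_add_le _ _).trans (add_le_add le_rfl ?_)
  refine (intervalIntegral.abs_integral_le_integral_abs hR).trans ?_
  apply intervalIntegral.integral_mono_on hR
  · exact (hcont.abs).intervalIntegrable _ _
  · exact ((hcd.comp hsm).norm).intervalIntegrable _ _
  · intro r _
    calc |fderiv ℝ v (r • w) w| = ‖fderiv ℝ v (r • w) w‖ := rfl
      _ ≤ ‖fderiv ℝ v (r • w)‖ * ‖w‖ := (fderiv ℝ v (r • w)).le_opNorm w
      _ = ‖fderiv ℝ v (r • w)‖ := by rw [hw, mul_one]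

/-- if `v ∈ C¹(ℝ²)` and `∫_{ℝ²} |∇v|^p dx < ∞` for some
`p ∈ (1,2)`, then `sup_{R ≥ 1} ∫_0^{2π} |v(R cos θ, R sin θ)|^p dθ < ∞`. -/
theorem circle_integral_bound_sub (p : ℝ) (hp1 : 1 < p) (hp2 : p < 2)
    (v : Plane → ℝ) (hv : ContDiff ℝ 1 v)
    (henergy : ∫⁻ x : Plane, ENNReal.ofReal (‖fderiv ℝ v x‖ ^ p) < ⊤) :
    ∃ C : ℝ, ∀ R : ℝ, 1 ≤ R →
      (∫ θ in (0 : ℝ)..(2 * π), |v (pt (R * Real.cos θ) (R * Real.sin θ))| ^ p)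
        ≤ C := by
  have hp0 : 0 < p := lt_trans one_pos hp1
  set q : ℝ := Real.conjExponent p with hq
  have hpq : p.HolderConjugate q := Real.HolderConjugate.conjExponent hp1
  set w : ℝ → Plane := fun θ => pt (cos θ) (sin θ) with hwdef
  set D : Plane → ℝ := fun x => ‖fderiv ℝ v x‖ with hDdef
  have hD : Continuous D := (hv.continuous_fderiv one_ne_zero).norm
  have hDnn : ∀ x, 0 ≤ D x := fun x => norm_nonneg _
  -- exponent fact
  have hqp : -(q/p) < -1 := by
    have : q / p = 1 / (p - 1) := by
      rw [hq, Real.conjExponent]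
      rw [div_div, mul_comm, ← div_div, div_self hp0.ne']
    rw [this]
    have h1 : 0 < p - 1 := by linarith
    have h2 : p - 1 < 1 := by linarith
    rw [neg_lt_neg_iff]
    rw [lt_div_iff₀ h1]
    linarith
  set Kq : ENNReal := ∫⁻ r in Ioi (1:ℝ), ENNReal.ofReal (r ^ (-(q/p))) with hKqdef
  have hKq : Kq < ⊤ := Kq_lt_top' hqp
  set G : ℝ → ENNReal :=
    fun θ => ∫⁻ r in Ioi (1:ℝ), ENNReal.ofReal (D (r • w θ) ^ p) * ENNReal.ofReal r with hGdef
  set A : ENNReal := ∫⁻ θ in Ioc (-π) π, ENNReal.ofReal (|v (w θ)| ^ p) with hAdef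
  have hcontv : Continuous fun θ => |v (w θ)| ^ p := by
    apply Continuous.rpow_const ((hv.continuous.comp pt_cont').abs)
    intro x
    exact Or.inr hp0.le
  have hA : A < ⊤ := (hcontv.integrableOn_Ioc).lintegral_lt_top
  set E : ENNReal := ∫⁻ x : Plane, ENNReal.ofReal (D x ^ p) with hEdef
  have hE : E < ⊤ := henergy
  -- the bound
  set Bnd : ENNReal := (2:ENNReal) ^ p * (A + Kq ^ (p/q) * E) with hBnd
  have hKqpq : Kq ^ (p/q) < ⊤ :=
    ENNReal.rpow_lt_top_of_nonneg (div_nonneg hp0.le hpq.symm.pos.le) hKq.ne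
  have hBndtop : Bnd ≠ ⊤ := by
    apply ENNReal.mul_ne_top
    · exact (ENNReal.rpow_lt_top_of_nonneg hp0.le (by norm_num)).ne
    · exact ENNReal.add_ne_top.2 ⟨hA.ne, ENNReal.mul_ne_top hKqpq.ne hE.ne⟩
  refine ⟨Bnd.toReal, fun R hR => ?_⟩
  -- rewrite the integrand
  have hrw : ∀ θ : ℝ, pt (R * cos θ) (R * sin θ) = R • w θ := fun θ => pt_smul' R _ _
  simp only [hrw]
  -- periodicity: shift the interval to (-π, π]
  have hper : Function.Periodic (fun θ => |v (R • w θ)| ^ p) (2 * π) := by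
    intro θ
    have : w (θ + 2 * π) = w θ := by
      simp only [hwdef]
      rw [Real.cos_add_two_pi, Real.sin_add_two_pi]
    simp only [this]
  have hshift : (∫ θ in (0:ℝ)..(2*π), |v (R • w θ)| ^ p)
      = ∫ θ in (-π)..π, |v (R • w θ)| ^ p := by
    have h0 := hper.intervalIntegral_add_eq 0 (-π)
    rw [zero_add] at h0
    rw [h0]
    congr 1
    ring
  rw [hshift]
  -- convert to a lintegral
  have hcontR : Continuous fun θ => |v (R • w θ)| ^ p := by
    apply Continuous.rpow_const ((hv.continuous.comp ((continuous_const : Continuous fun _ : ℝ => R).smul pt_cont')).abs)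
    intro x; exact Or.inr hp0.le
  have hle1 : (-π : ℝ) ≤ π := by linarith [pi_pos]
  rw [intervalIntegral.integral_of_le hle1,
    MeasureTheory.integral_eq_lintegral_of_nonneg_ae
      (Filter.Eventually.of_forall fun θ => by positivity)
      (hcontR.aestronglyMeasurable.restrict)]
  -- pointwise bound
  have hpoint : ∀ θ : ℝ, ENNReal.ofReal (|v (R • w θ)| ^ p)
      ≤ (2:ENNReal) ^ p * (ENNReal.ofReal (|v (w θ)| ^ p) + Kq ^ (p/q) * G θ) := by
    intro θ
    have hwnorm : ‖w θ‖ = 1 := norm_pt_cos_sin' θ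
    have hftc := ftc_ray' v hv (w θ) hwnorm R hR
    set S : ℝ := ∫ r in (1:ℝ)..R, ‖fderiv ℝ v (r • w θ)‖ with hS
    have hSnn : 0 ≤ S := by
      apply intervalIntegral.integral_nonneg hR
      intro r _; exact norm_nonneg _
    have hholder : ENNReal.ofReal S ≤ G θ ^ (1/p) * Kq ^ (1/q) := by
      exact holder_ray' hpq (fun r => D (r • w θ))
        (hD.comp (continuous_id.smul continuous_const)) (fun r => hDnn _) R hR
    calc ENNReal.ofReal (|v (R • w θ)| ^ p)
        = ENNReal.ofReal (|v (R • w θ)|) ^ p := by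
          rw [ENNReal.ofReal_rpow_of_nonneg (abs_nonneg _) hp0.le]
      _ ≤ (ENNReal.ofReal (|v (w θ)| + S)) ^ p :=
          ENNReal.rpow_le_rpow (ENNReal.ofReal_le_ofReal hftc) hp0.le
      _ = (ENNReal.ofReal (|v (w θ)|) + ENNReal.ofReal S) ^ p := by
          rw [ENNReal.ofReal_add (abs_nonneg _) hSnn]
      _ ≤ (2:ENNReal) ^ p * (ENNReal.ofReal (|v (w θ)|) ^ p + ENNReal.ofReal S ^ p) :=
          add_rpow_le' _ _ hp0.le
      _ ≤ (2:ENNReal) ^ p * (ENNReal.ofReal (|v (w θ)| ^ p) + Kq ^ (p/q) * G θ) := by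
          gcongr
          · rw [ENNReal.ofReal_rpow_of_nonneg (abs_nonneg _) hp0.le]
          · calc ENNReal.ofReal S ^ p ≤ (G θ ^ (1/p) * Kq ^ (1/q)) ^ p :=
                ENNReal.rpow_le_rpow hholder hp0.le
              _ = G θ * Kq ^ (p/q) := by
                rw [ENNReal.mul_rpow_of_nonneg _ _ hp0.le, ← ENNReal.rpow_mul,
                  ← ENNReal.rpow_mul, one_div_mul_cancel hp0.ne', ENNReal.rpow_one]
                congr 1
                rw [div_eq_mul_inv]
                ring
              _ = Kq ^ (p/q) * G θ := mul_comm _ _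
  -- integrate the pointwise bound
  have hmeas1 : Measurable fun θ => ENNReal.ofReal (|v (w θ)| ^ p) :=
    ENNReal.measurable_ofReal.comp hcontv.measurable
  have hbound : (∫⁻ θ in Ioc (-π) π, ENNReal.ofReal (|v (R • w θ)| ^ p)) ≤ Bnd := by
    calc ∫⁻ θ in Ioc (-π) π, ENNReal.ofReal (|v (R • w θ)| ^ p)
        ≤ ∫⁻ θ in Ioc (-π) π,
            (2:ENNReal) ^ p * (ENNReal.ofReal (|v (w θ)| ^ p) + Kq ^ (p/q) * G θ) :=
          lintegral_mono fun θ => hpoint θ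
      _ = (2:ENNReal) ^ p * (A + Kq ^ (p/q) * ∫⁻ θ in Ioc (-π) π, G θ) := by
          rw [lintegral_const_mul' _ _ (ENNReal.rpow_lt_top_of_nonneg hp0.le (by norm_num)).ne,
            lintegral_add_left hmeas1, lintegral_const_mul' _ _ hKqpq.ne]
      _ ≤ (2:ENNReal) ^ p * (A + Kq ^ (p/q) * E) := by
          gcongr
          exact theta_int' (fun x => ENNReal.ofReal (D x ^ p))
            (ENNReal.measurable_ofReal.comp
              ((hD.rpow_const (fun x => Or.inr hp0.le)).measurable))
  exact ENNReal.toReal_mono hBndtop hbound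
end
end

section
/- Suppose v ∈ C¹(ℝ²) satisfies ∫_{ℝ²} |∇v|^p dx < ∞ for some p ∈ (2,∞). Then limsup_{R→∞} R^{-(3 - 2/p)} ∫_{B_R(0)} |v| dx < ∞. -/
noncomputable section
open MeasureTheory Real
open scoped ENNReal

lemma aux_lint_smul (g : Plane → ℝ≥0∞) (hg : Measurable g) {t : ℝ} (ht : t ≠ 0) :
    ∫⁻ x, g (t • x) = ENNReal.ofReal |(t ^ 2)⁻¹| * ∫⁻ x, g x := by
  have hm : Measurable fun x : Plane => t • x := measurable_const_smul t
  rw [← lintegral_map hg hm, Measure.map_addHaar_smul volume ht,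
    finrank_euclideanSpace_fin, lintegral_smul_measure, smul_eq_mul]

lemma aux_ptwise (v : Plane → ℝ) (hv : ContDiff ℝ 1 v) (x : Plane) :
    |v x| ≤ |v 0| + ∫ t in (0:ℝ)..1, ‖x‖ * ‖fderiv ℝ v (t • x)‖ := by
  have hdv : Continuous (fderiv ℝ v) := hv.continuous_fderiv one_ne_zero
  have hc : Continuous fun t : ℝ => (fderiv ℝ v (t • x)) x :=
    ((ContinuousLinearMap.apply ℝ ℝ x).continuous.comp
      (hdv.comp ((continuous_id.smul continuous_const)))).congr (fun _ => rfl)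
  have key : ∫ t in (0:ℝ)..1, (fderiv ℝ v (t • x)) x = v ((1:ℝ) • x) - v ((0:ℝ) • x) := by
    apply intervalIntegral.integral_eq_sub_of_hasDerivAt (f := fun s : ℝ => v (s • x))
    · intro t _
      have h1 : HasDerivAt (fun s : ℝ => s • x) x t := by
        simpa using (hasDerivAt_id t).smul_const x
      exact ((hv.differentiable one_ne_zero) (t • x)).hasFDerivAt.comp_hasDerivAt t h1
    · exact hc.intervalIntegrable 0 1
  have h2 : v x = v 0 + ∫ t in (0:ℝ)..1, (fderiv ℝ v (t • x)) x := by
    rw [key]; simp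
  calc |v x| ≤ |v 0| + |∫ t in (0:ℝ)..1, (fderiv ℝ v (t • x)) x| := by
        rw [h2]; exact abs_add_le _ _
    _ ≤ |v 0| + ∫ t in (0:ℝ)..1, ‖x‖ * ‖fderiv ℝ v (t • x)‖ := by
        gcongr
        refine (intervalIntegral.abs_integral_le_integral_abs zero_le_one).trans ?_
        apply intervalIntegral.integral_mono_on zero_le_one
          (hc.abs.intervalIntegrable 0 1)
          ((continuous_const.mul (hdv.comp
            (continuous_id.smul continuous_const)).norm).intervalIntegrable 0 1)
        intro t _
        calc |(fderiv ℝ v (t • x)) x| ≤ ‖fderiv ℝ v (t • x)‖ * ‖x‖ :=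
              (fderiv ℝ v (t • x)).le_opNorm x
          _ = ‖x‖ * ‖fderiv ℝ v (t • x)‖ := mul_comm _ _

/-- if `v ∈ C¹(ℝ²)` and `∫_{ℝ²} |∇v|^p dx < ∞` for some
`p ∈ (2,∞)`, then `limsup_{R→∞} R^{-(3-2/p)} ∫_{B_R(0)} |v| dx < ∞`. -/
theorem mean_growth_super (p : ℝ) (hp : 2 < p)
    (v : Plane → ℝ) (hv : ContDiff ℝ 1 v)
    (henergy : ∫⁻ x : Plane, ENNReal.ofReal (‖fderiv ℝ v x‖ ^ p) < ⊤) :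
    ∃ C R₀ : ℝ, ∀ R : ℝ, R₀ ≤ R →
      R ^ (-(3 - 2 / p)) * (∫ x in Metric.ball (0 : Plane) R, |v x|) ≤ C := by
  have hp0 : (0:ℝ) < p := by linarith
  set q : ℝ := p / (p - 1) with hqdef
  have hpq : p.HolderConjugate q := Real.HolderConjugate.conjExponent (by linarith)
  have hq0 : 0 < q := hpq.symm.pos
  have hqne : q ≠ 0 := hq0.ne'
  have h2p1 : 2 / p < 1 := (div_lt_one hp0).2 (by linarith)
  have heq : 1 + 2 * (1 / q) = 3 - 2 / p := by
    rw [hqdef]; field_simp; ring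
  have he2 : (2:ℝ) ≤ 3 - 2 / p := by linarith
  have he0 : (0:ℝ) ≤ 3 - 2 / p := by linarith
  have hdv : Continuous (fderiv ℝ v) := hv.continuous_fderiv one_ne_zero
  set E : ℝ≥0∞ := ∫⁻ x : Plane, ENNReal.ofReal ‖fderiv ℝ v x‖ ^ p with hEdef
  have hE : E ≠ ⊤ := by
    rw [hEdef]
    have : ∀ x : Plane, ENNReal.ofReal ‖fderiv ℝ v x‖ ^ p
        = ENNReal.ofReal (‖fderiv ℝ v x‖ ^ p) := fun x =>
      ENNReal.ofReal_rpow_of_nonneg (norm_nonneg _) hp0.le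
    rw [lintegral_congr this]
    exact henergy.ne
  set κ : ℝ≥0∞ := volume (Metric.ball (0:Plane) 1) with hκdef
  have hκ : κ ≠ ⊤ := measure_ball_lt_top.ne
  set Γ : ℝ≥0∞ := ∫⁻ t in Set.Ioc (0:ℝ) 1, ENNReal.ofReal t ^ (-(2/p)) with hΓdef
  have hΓ : Γ ≠ ⊤ := by
    have hexp : (-1:ℝ) < -(2/p) := by linarith
    have hint : IntervalIntegrable (fun t : ℝ => t ^ (-(2/p))) volume 0 1 :=
      intervalIntegral.intervalIntegrable_rpow' hexp
    rw [intervalIntegrable_iff, Set.uIoc_of_le zero_le_one] at hint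
    have hcong : Γ = ∫⁻ t in Set.Ioc (0:ℝ) 1, ENNReal.ofReal (t ^ (-(2/p))) := by
      refine setLIntegral_congr_fun measurableSet_Ioc (fun t ht => ?_)
      exact ENNReal.ofReal_rpow_of_pos ht.1
    rw [hcong]
    refine ne_of_lt (lt_of_le_of_lt (lintegral_mono fun t => Real.ofReal_le_enorm _) ?_)
    exact hint.2
  set M : ℝ≥0∞ := ENNReal.ofReal |v 0| * κ + κ ^ (1/q) * E ^ (1/p) * Γ with hMdef
  have hM : M ≠ ⊤ := by
    rw [hMdef]
    refine ENNReal.add_ne_top.2 ⟨ENNReal.mul_ne_top ENNReal.ofReal_ne_top hκ, ?_⟩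
    exact ENNReal.mul_ne_top (ENNReal.mul_ne_top
      (ENNReal.rpow_ne_top_of_nonneg (by positivity) hκ)
      (ENNReal.rpow_ne_top_of_nonneg (by positivity) hE)) hΓ
  -- measurability helpers
  have hgm : Measurable fun y : Plane => ENNReal.ofReal ‖fderiv ℝ v y‖ :=
    ENNReal.measurable_ofReal.comp hdv.norm.measurable
  have hgc : Continuous fun y : Plane => ENNReal.ofReal ‖fderiv ℝ v y‖ :=
    ENNReal.continuous_ofReal.comp hdv.norm
  -- main estimate
  have total : ∀ R : ℝ, 1 ≤ R →
      (∫⁻ x in Metric.ball (0:Plane) R, ENNReal.ofReal |v x|)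
        ≤ M * ENNReal.ofReal R ^ (3 - 2/p) := by
    intro R hR1
    have hR0 : (0:ℝ) ≤ R := le_trans zero_le_one hR1
    set A : ℝ≥0∞ := ENNReal.ofReal R with hAdef
    have hA1 : 1 ≤ A := by
      rw [hAdef]; exact ENNReal.one_le_ofReal.2 hR1
    have hAne0 : A ≠ 0 := fun h => by simp [h] at hA1
    have hAnetop : A ≠ ⊤ := ENNReal.ofReal_ne_top
    have hvol : volume (Metric.ball (0:Plane) R) = ENNReal.ofReal (R^2) * κ := by
      have := Measure.addHaar_ball (volume : Measure Plane) 0 hR0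
      rw [this, finrank_euclideanSpace_fin]
    have h2 : ENNReal.ofReal (R^2) = A ^ (2:ℝ) := by
      rw [hAdef, ENNReal.ofReal_pow hR0, ← ENNReal.rpow_natCast]; norm_num
    -- step 1: pointwise
    have step1 : ∀ x : Plane, ENNReal.ofReal |v x| ≤ ENNReal.ofReal |v 0|
        + ∫⁻ t in Set.Ioc (0:ℝ) 1, ENNReal.ofReal ‖x‖ * ENNReal.ofReal ‖fderiv ℝ v (t • x)‖ := by
      intro x
      have h := aux_ptwise v hv x
      have hcont : Continuous fun t : ℝ => ‖x‖ * ‖fderiv ℝ v (t • x)‖ :=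
        continuous_const.mul ((hdv.comp (continuous_id.smul continuous_const)).norm)
      have hInt : IntegrableOn (fun t : ℝ => ‖x‖ * ‖fderiv ℝ v (t • x)‖) (Set.Ioc 0 1) volume :=
        (hcont.integrableOn_Ioc)
      have hnn : (0:ℝ) ≤ ∫ t in (0:ℝ)..1, ‖x‖ * ‖fderiv ℝ v (t • x)‖ :=
        intervalIntegral.integral_nonneg zero_le_one fun t _ => by positivity
      calc ENNReal.ofReal |v x|
          ≤ ENNReal.ofReal (|v 0| + ∫ t in (0:ℝ)..1, ‖x‖ * ‖fderiv ℝ v (t • x)‖) :=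
            ENNReal.ofReal_le_ofReal h
        _ = ENNReal.ofReal |v 0|
            + ENNReal.ofReal (∫ t in (0:ℝ)..1, ‖x‖ * ‖fderiv ℝ v (t • x)‖) :=
            ENNReal.ofReal_add (abs_nonneg _) hnn
        _ = ENNReal.ofReal |v 0|
            + ENNReal.ofReal (∫ t in Set.Ioc (0:ℝ) 1, ‖x‖ * ‖fderiv ℝ v (t • x)‖) := by
            rw [intervalIntegral.integral_of_le zero_le_one]
        _ = ENNReal.ofReal |v 0|
            + ∫⁻ t in Set.Ioc (0:ℝ) 1, ENNReal.ofReal (‖x‖ * ‖fderiv ℝ v (t • x)‖) := by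
            rw [ofReal_integral_eq_lintegral_ofReal hInt
              (ae_of_all _ fun t => by positivity)]
        _ = ENNReal.ofReal |v 0|
            + ∫⁻ t in Set.Ioc (0:ℝ) 1,
                ENNReal.ofReal ‖x‖ * ENNReal.ofReal ‖fderiv ℝ v (t • x)‖ := by
            congr 1
            exact lintegral_congr fun t => ENNReal.ofReal_mul (norm_nonneg _)
    -- inner Hölder estimate
    have inner : ∀ t ∈ Set.Ioc (0:ℝ) 1,
        (∫⁻ x in Metric.ball (0:Plane) R,
            ENNReal.ofReal ‖x‖ * ENNReal.ofReal ‖fderiv ℝ v (t • x)‖)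
          ≤ (A ^ (3 - 2/p) * κ ^ (1/q) * E ^ (1/p)) * ENNReal.ofReal t ^ (-(2/p)) := by
      intro t ht
      have hmeasp : Measurable fun y : Plane => ENNReal.ofReal ‖fderiv ℝ v y‖ ^ p :=
        (ENNReal.continuous_rpow_const.comp hgc).measurable
      have b1 : (∫⁻ x in Metric.ball (0:Plane) R, ENNReal.ofReal ‖x‖ ^ q)
          ≤ A ^ q * (A ^ (2:ℝ) * κ) := by
        calc (∫⁻ x in Metric.ball (0:Plane) R, ENNReal.ofReal ‖x‖ ^ q)
            ≤ ∫⁻ _x in Metric.ball (0:Plane) R, A ^ q := by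
              refine setLIntegral_mono measurable_const fun x hx => ?_
              exact ENNReal.rpow_le_rpow
                (ENNReal.ofReal_le_ofReal (le_of_lt (mem_ball_zero_iff.1 hx))) hq0.le
          _ = A ^ q * volume (Metric.ball (0:Plane) R) := setLIntegral_const _ _
          _ = A ^ q * (A ^ (2:ℝ) * κ) := by rw [hvol, h2]
      have b2 : (∫⁻ x in Metric.ball (0:Plane) R, ENNReal.ofReal ‖fderiv ℝ v (t • x)‖ ^ p)
          ≤ ENNReal.ofReal ((t^2)⁻¹) * E := by
        calc (∫⁻ x in Metric.ball (0:Plane) R, ENNReal.ofReal ‖fderiv ℝ v (t • x)‖ ^ p)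
            ≤ ∫⁻ x : Plane, ENNReal.ofReal ‖fderiv ℝ v (t • x)‖ ^ p :=
              setLIntegral_le_lintegral _ _
          _ = ENNReal.ofReal |(t^2)⁻¹| * E :=
              aux_lint_smul (fun y => ENNReal.ofReal ‖fderiv ℝ v y‖ ^ p) hmeasp (ne_of_gt ht.1)
          _ = ENNReal.ofReal ((t^2)⁻¹) * E := by
              rw [abs_of_nonneg (inv_nonneg.2 (sq_nonneg t))]
      have holder : (∫⁻ x in Metric.ball (0:Plane) R,
            ENNReal.ofReal ‖x‖ * ENNReal.ofReal ‖fderiv ℝ v (t • x)‖)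
          ≤ (∫⁻ x in Metric.ball (0:Plane) R, ENNReal.ofReal ‖x‖ ^ q) ^ (1/q)
            * (∫⁻ x in Metric.ball (0:Plane) R,
                ENNReal.ofReal ‖fderiv ℝ v (t • x)‖ ^ p) ^ (1/p) := by
        exact ENNReal.lintegral_mul_le_Lp_mul_Lq _ hpq.symm
          (ENNReal.continuous_ofReal.comp continuous_norm).measurable.aemeasurable
          (hgm.comp (measurable_const_smul t)).aemeasurable
      have hofRt : ENNReal.ofReal ((t^2)⁻¹) ^ (1/p) = ENNReal.ofReal t ^ (-(2/p)) := by
        have h1 : (t^2)⁻¹ = t ^ (-(2:ℝ)) := by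
          rw [← Real.rpow_natCast t 2, ← Real.rpow_neg ht.1.le]; norm_num
        rw [h1, ← ENNReal.ofReal_rpow_of_pos ht.1, ← ENNReal.rpow_mul]
        norm_num
        ring_nf
      calc (∫⁻ x in Metric.ball (0:Plane) R,
            ENNReal.ofReal ‖x‖ * ENNReal.ofReal ‖fderiv ℝ v (t • x)‖)
          ≤ (∫⁻ x in Metric.ball (0:Plane) R, ENNReal.ofReal ‖x‖ ^ q) ^ (1/q)
            * (∫⁻ x in Metric.ball (0:Plane) R,
                ENNReal.ofReal ‖fderiv ℝ v (t • x)‖ ^ p) ^ (1/p) := holder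
        _ ≤ (A ^ q * (A ^ (2:ℝ) * κ)) ^ (1/q) * (ENNReal.ofReal ((t^2)⁻¹) * E) ^ (1/p) := by
            exact mul_le_mul' (ENNReal.rpow_le_rpow b1 (by positivity))
              (ENNReal.rpow_le_rpow b2 (by positivity))
        _ = (A ^ (3 - 2/p) * κ ^ (1/q) * E ^ (1/p)) * ENNReal.ofReal t ^ (-(2/p)) := by
            rw [ENNReal.mul_rpow_of_nonneg _ _ (by positivity : (0:ℝ) ≤ 1/q),
              ENNReal.mul_rpow_of_nonneg _ _ (by positivity : (0:ℝ) ≤ 1/q),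
              ENNReal.mul_rpow_of_nonneg _ _ (by positivity : (0:ℝ) ≤ 1/p),
              ← ENNReal.rpow_mul, ← ENNReal.rpow_mul, hofRt,
              show q * (1/q) = (1:ℝ) by field_simp]
            have hApow : A ^ (1:ℝ) * A ^ (2 * (1/q)) = A ^ (3 - 2/p) := by
              rw [← ENNReal.rpow_add _ _ hAne0 hAnetop, heq]
            rw [← hApow]
            ring
    -- Fubini and assembly
    have hFmeas : AEMeasurable (Function.uncurry fun (x : Plane) (t : ℝ) =>
        ENNReal.ofReal ‖x‖ * ENNReal.ofReal ‖fderiv ℝ v (t • x)‖)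
        ((volume.restrict (Metric.ball (0:Plane) R)).prod
          (volume.restrict (Set.Ioc (0:ℝ) 1))) := by
      exact ((ENNReal.measurable_ofReal.comp measurable_fst.norm).mul
        (hgm.comp (measurable_snd.smul measurable_fst))).aemeasurable
    have hmeasΓ : Measurable fun t : ℝ => ENNReal.ofReal t ^ (-(2/p)) :=
      (ENNReal.continuous_rpow_const.comp ENNReal.continuous_ofReal).measurable
    calc (∫⁻ x in Metric.ball (0:Plane) R, ENNReal.ofReal |v x|)
        ≤ ∫⁻ x in Metric.ball (0:Plane) R, (ENNReal.ofReal |v 0|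
            + ∫⁻ t in Set.Ioc (0:ℝ) 1,
                ENNReal.ofReal ‖x‖ * ENNReal.ofReal ‖fderiv ℝ v (t • x)‖) :=
          lintegral_mono fun x => step1 x
      _ = ENNReal.ofReal |v 0| * volume (Metric.ball (0:Plane) R)
          + ∫⁻ x in Metric.ball (0:Plane) R, ∫⁻ t in Set.Ioc (0:ℝ) 1,
              ENNReal.ofReal ‖x‖ * ENNReal.ofReal ‖fderiv ℝ v (t • x)‖ := by
          rw [lintegral_add_left measurable_const, setLIntegral_const]
      _ = ENNReal.ofReal |v 0| * volume (Metric.ball (0:Plane) R)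
          + ∫⁻ t in Set.Ioc (0:ℝ) 1, ∫⁻ x in Metric.ball (0:Plane) R,
              ENNReal.ofReal ‖x‖ * ENNReal.ofReal ‖fderiv ℝ v (t • x)‖ := by
          rw [lintegral_lintegral_swap hFmeas]
      _ ≤ ENNReal.ofReal |v 0| * (A ^ (2:ℝ) * κ)
          + ∫⁻ t in Set.Ioc (0:ℝ) 1,
              (A ^ (3 - 2/p) * κ ^ (1/q) * E ^ (1/p)) * ENNReal.ofReal t ^ (-(2/p)) := by
          refine add_le_add (le_of_eq (by rw [hvol, h2]))
            (setLIntegral_mono (measurable_const.mul hmeasΓ) fun t ht => inner t ht)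
      _ = ENNReal.ofReal |v 0| * (A ^ (2:ℝ) * κ)
          + (A ^ (3 - 2/p) * κ ^ (1/q) * E ^ (1/p)) * Γ := by
          rw [lintegral_const_mul _ hmeasΓ]
      _ ≤ ENNReal.ofReal |v 0| * (A ^ (3 - 2/p) * κ)
          + (A ^ (3 - 2/p) * κ ^ (1/q) * E ^ (1/p)) * Γ := by
          exact add_le_add_left (mul_le_mul_right
            (mul_le_mul_left (ENNReal.rpow_le_rpow_of_exponent_le hA1 he2) κ) _) _
      _ = M * A ^ (3 - 2/p) := by rw [hMdef]; ring
  -- conclusion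
  refine ⟨M.toReal, 1, fun R hR1 => ?_⟩
  have hR0 : (0:ℝ) ≤ R := le_trans zero_le_one hR1
  have hRpos : (0:ℝ) < R := lt_of_lt_of_le zero_lt_one hR1
  have hInt : ∫ x in Metric.ball (0:Plane) R, |v x|
      = (∫⁻ x in Metric.ball (0:Plane) R, ENNReal.ofReal |v x|).toReal :=
    integral_eq_lintegral_of_nonneg_ae (ae_of_all _ fun x => abs_nonneg _)
      hv.continuous.abs.aestronglyMeasurable.restrict
  have hrhs_ne : M * ENNReal.ofReal R ^ (3 - 2/p) ≠ ⊤ :=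
    ENNReal.mul_ne_top hM (ENNReal.rpow_ne_top_of_nonneg he0 ENNReal.ofReal_ne_top)
  have hle : (∫⁻ x in Metric.ball (0:Plane) R, ENNReal.ofReal |v x|).toReal
      ≤ M.toReal * R ^ (3 - 2/p) := by
    have := ENNReal.toReal_mono hrhs_ne (total R hR1)
    rwa [ENNReal.toReal_mul, ← ENNReal.toReal_rpow, ENNReal.toReal_ofReal hR0] at this
  rw [hInt]
  calc R ^ (-(3 - 2/p)) * (∫⁻ x in Metric.ball (0:Plane) R, ENNReal.ofReal |v x|).toReal
      ≤ R ^ (-(3 - 2/p)) * (M.toReal * R ^ (3 - 2/p)) := by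
        exact mul_le_mul_of_nonneg_left hle (Real.rpow_nonneg hR0 _)
    _ = M.toReal := by
        rw [Real.rpow_neg hR0, mul_comm, mul_assoc,
          mul_inv_cancel₀ (ne_of_gt (Real.rpow_pos_of_pos hRpos _)), mul_one]
end
end
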